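/- For every integer n ≥ 2, the index of Simon's congruence over a two-letter alphabet satisfies C₂(n) ≤ 2 · Σ_{m=0}^{2n−1} n^m = 2·(n^(2n) − 1)/(n − 1). -/

import Mathlib

/-- Simon's congruence: `x ∼ₙ y` iff `x` and `y` have the same subwords
(scattered subsequences) of length at most `n`. -/
def SimonCong {α : Type*} (n : ℕ) (x y : List α) : Prop :=
  ∀ w : List α, w.length ≤ n → (w.Sublist x ↔ w.Sublist y)

/-- Simon's congruence as a setoid on words over `α`. -/
def simonSetoid (α : Type*) (n : ℕ) : Setoid (List α) :=
  ⟨SimonCong n,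
    ⟨fun _ _ _ => Iff.rfl,
     fun h w hw => (h w hw).symm,
     fun h1 h2 w hw => (h1 w hw).trans (h2 w hw)⟩⟩

/-- `simonIndex k n` is `C_k(n)`, the number of equivalence classes of
Simon's congruence `∼ₙ` over a `k`-letter alphabet. -/
noncomputable def simonIndex (k n : ℕ) : ℕ :=
  Nat.card (Quotient (simonSetoid (Fin k) n))


/-- alternating word of length k starting with c -/
def alt : Fin 2 → ℕ → List (Fin 2)
  | _, 0 => []
  | c, k+1 => c :: alt (c+1) k

/-- word from run-length encoding -/
def fromRuns : Fin 2 → List ℕ → List (Fin 2)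
  | _, [] => []
  | c, l :: ls => List.replicate l c ++ fromRuns (c+1) ls

lemma fin2add : ∀ c : Fin 2, c + 1 + 1 = c := by decide

lemma fin2ne {c d : Fin 2} (h : d ≠ c) : d = c + 1 := by revert h; revert c d; decide

lemma alt_two_succ (c : Fin 2) (m : ℕ) :
    alt c (2*(m+1)) = c :: (c+1) :: alt c (2*m) := by
  have e : 2 * (m+1) = (2*m + 1) + 1 := by ring
  rw [e]
  show c :: alt (c+1) (2*m+1) = _
  show c :: ((c+1) :: alt (c+1+1) (2*m)) = _
  rw [fin2add]

lemma alt_sub : ∀ (m : ℕ) (w : List (Fin 2)) (c : Fin 2), w.length ≤ m → w.Sublist (alt c (2*m))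
  | 0, w, c, hw => by
      have : w = [] := List.eq_nil_of_length_eq_zero (Nat.le_zero.mp hw)
      simp [this]
  | m+1, [], c, hw => List.nil_sublist _
  | m+1, d :: w', c, hw => by
      rw [alt_two_succ]
      by_cases hd : d = c
      · subst hd
        exact ((alt_sub m w' d (by simpa using hw)).cons _).cons₂ _
      · rw [fin2ne hd]
        exact ((alt_sub m w' c (by simp at hw; omega)).cons₂ _).cons _

lemma alt_mono : ∀ (k m : ℕ) (c : Fin 2), k ≤ m → (alt c k).Sublist (alt c m)
  | 0, m, c, _ => List.nil_sublist _
  | k+1, m+1, c, h => (alt_mono k m (c+1) (by omega)).cons₂ _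

lemma alt_fromRuns : ∀ (ls : List ℕ) (c : Fin 2), (∀ l ∈ ls, 1 ≤ l) →
    (alt c ls.length).Sublist (fromRuns c ls)
  | [], c, _ => List.nil_sublist _
  | l :: ls, c, h => by
      show ([c] ++ alt (c+1) ls.length).Sublist (List.replicate l c ++ fromRuns (c+1) ls)
      refine List.Sublist.append ?_ (alt_fromRuns ls (c+1) fun x hx => h x (by simp [hx]))
      rw [List.singleton_sublist]
      exact List.mem_replicate.mpr ⟨by have := h l (by simp); omega, rfl⟩

lemma simon_trans {α : Type*} {n : ℕ} {x y z : List α} (h1 : SimonCong n x y)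
    (h2 : SimonCong n y z) : SimonCong n x z :=
  fun w hw => (h1 w hw).trans (h2 w hw)

lemma simon_append {α : Type*} (n : ℕ) (p v v' : List α) (h : SimonCong n v v') :
    SimonCong n (p ++ v) (p ++ v') := by
  intro w hw
  rw [List.sublist_append_iff, List.sublist_append_iff]
  constructor
  · rintro ⟨w1, w2, rfl, h1, h2⟩
    exact ⟨w1, w2, rfl, h1, (h w2 (by simp at hw; omega)).mp h2⟩
  · rintro ⟨w1, w2, rfl, h1, h2⟩
    exact ⟨w1, w2, rfl, h1, (h w2 (by simp at hw; omega)).mpr h2⟩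

lemma simon_cap {α : Type*} (n m : ℕ) (c : α) (v : List α) :
    SimonCong n (List.replicate m c ++ v) (List.replicate (min m n) c ++ v) := by
  intro w hw
  constructor
  · intro h
    rw [List.sublist_append_iff] at h ⊢
    obtain ⟨w1, w2, rfl, h1, h2⟩ := h
    obtain ⟨k, hk, rfl⟩ := List.sublist_replicate_iff.mp h1
    refine ⟨_, w2, rfl, ?_, h2⟩
    have : k ≤ min m n := by simp at hw; omega
    exact ((List.replicate_sublist_replicate c).mpr this).trans (by simp)
  · intro h
    exact h.trans (List.Sublist.append
      ((List.replicate_sublist_replicate c).mpr (min_le_left m n)) (List.Sublist.refl v))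

lemma simon_capAll (n : ℕ) : ∀ (ls : List ℕ) (c : Fin 2),
    SimonCong n (fromRuns c ls) (fromRuns c (ls.map (fun l => min l n)))
  | [], c => fun _ _ => Iff.rfl
  | l :: ls, c => by
      show SimonCong n (List.replicate l c ++ fromRuns (c+1) ls)
        (List.replicate (min l n) c ++ fromRuns (c+1) (ls.map fun l => min l n))
      exact simon_trans
        (simon_append n (List.replicate l c) _ _ (simon_capAll n ls (c+1)))
        (simon_cap n l c _)

lemma simon_full (n : ℕ) (c : Fin 2) (ls : List ℕ) (h1 : ∀ l ∈ ls, 1 ≤ l)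
    (h2 : 2*n ≤ ls.length) : SimonCong n (fromRuns c ls) (alt 0 (2*n)) := by
  intro w hw
  exact iff_of_true
    ((alt_sub n w c hw).trans ((alt_mono _ _ c h2).trans (alt_fromRuns ls c h1)))
    (alt_sub n w 0 hw)

lemma exists_runs : ∀ x : List (Fin 2),
    x = [] ∨ ∃ c ls, ls ≠ [] ∧ (∀ l ∈ ls, 1 ≤ l) ∧ x = fromRuns c ls
  | [] => Or.inl rfl
  | c :: t => by
      rcases exists_runs t with rfl | ⟨c', ls', hne, hpos, rfl⟩
      · refine Or.inr ⟨c, [1], by simp, by simp, by simp [fromRuns]⟩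
      · by_cases hc : c' = c
        · subst hc
          obtain ⟨l, ls'', rfl⟩ := List.exists_cons_of_ne_nil hne
          refine Or.inr ⟨c', (l+1) :: ls'', by simp, ?_, ?_⟩
          · intro x hx; rcases List.mem_cons.mp hx with rfl | h
            · omega
            · exact hpos x (List.mem_cons_of_mem _ h)
          · show c' :: fromRuns c' (l :: ls'') = fromRuns c' ((l+1) :: ls'')
            show c' :: (List.replicate l c' ++ _) = List.replicate (l+1) c' ++ _
            simp [List.replicate_succ]
        · have : c = c' + 1 := fin2ne (Ne.symm hc)
          subst this
          refine Or.inr ⟨c' + 1, 1 :: ls', by simp, ?_, ?_⟩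
          · intro x hx; rcases List.mem_cons.mp hx with rfl | h
            · omega
            · exact hpos x h
          · show (c'+1) :: fromRuns c' ls' = List.replicate 1 (c'+1) ++ fromRuns (c'+1+1) ls'
            rw [fin2add]
            simp

theorem simon_index_two_letters (n : ℕ) (hn : 2 ≤ n) :
    simonIndex 2 n ≤ 2 * ∑ m ∈ Finset.range (2 * n), n ^ m ∧
      2 * ∑ m ∈ Finset.range (2 * n), n ^ m = 2 * ((n ^ (2 * n) - 1) / (n - 1)) := by
  constructor
  · classical
    let E := (Fin 2) ⊕ (Fin 2 × Σ b : Fin (2*n-1), (Fin (b.1+1) → Fin n))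
    let dec : E → Quotient (simonSetoid (Fin 2) n) := fun e =>
      match e with
      | .inl c => if c = 0 then ⟦[]⟧ else ⟦alt 0 (2*n)⟧
      | .inr (c, ⟨b, f⟩) => ⟦fromRuns c (List.ofFn fun i => ((f i).1 + 1))⟧
    have hsurj : Function.Surjective dec := by
      intro q
      induction q using Quotient.ind with
      | _ x =>
      rcases exists_runs x with rfl | ⟨c, ls, hne, hpos, rfl⟩
      · exact ⟨.inl 0, by simp [dec]⟩
      · by_cases hlen : 2*n ≤ ls.length
        · refine ⟨.inl 1, ?_⟩
          show (if (1 : Fin 2) = 0 then _ else ⟦alt 0 (2*n)⟧) = _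
          rw [if_neg (by decide)]
          exact Quotient.sound (fun w hw => ((simon_full n c ls hpos hlen) w hw).symm)
        · have hlb : 1 ≤ ls.length := List.length_pos_iff.mpr hne
          have hub : ls.length - 1 < 2*n - 1 := by omega
          have hcast : ls.length - 1 + 1 = ls.length := by omega
          refine ⟨.inr (c, ⟨⟨ls.length - 1, hub⟩, fun i =>
            ⟨min (ls.get (Fin.cast hcast i)) n - 1, by
              have := hpos (ls.get (Fin.cast hcast i)) (ls.get_mem _)
              omega⟩⟩), ?_⟩
          show ⟦fromRuns c (List.ofFn fun i => _)⟧ = _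
          refine Quotient.sound (fun w hw => ?_)
          have heq : (List.ofFn fun i : Fin (ls.length - 1 + 1) =>
              (min (ls.get (Fin.cast hcast i)) n - 1 + 1)) = ls.map (fun l => min l n) := by
            apply List.ext_getElem
            · simp; omega
            · intro i h1 h2
              have hilt : i < ls.length := by simpa using h2
              simp only [List.getElem_ofFn, List.getElem_map, List.get_eq_getElem,
                Fin.coe_cast]
              have h3 := hpos ls[i] (List.getElem_mem hilt)
              have h4 : 1 ≤ min ls[i] n := by omega
              omega
          rw [heq]
          exact ((simon_capAll n ls c) w hw).symm
    have hfin : Nat.card (Quotient (simonSetoid (Fin 2) n)) ≤ Nat.card E :=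
      Nat.card_le_card_of_surjective dec hsurj
    have hE : Nat.card E = 2 * ∑ m ∈ Finset.range (2*n), n ^ m := by
      rw [Nat.card_eq_fintype_card]
      simp only [E, Fintype.card_sum, Fintype.card_prod, Fintype.card_sigma,
        Fintype.card_fun, Fintype.card_fin]
      rw [Fin.sum_univ_eq_sum_range (fun b => n ^ (b+1))]
      have h2n : 2*n = (2*n-1)+1 := by omega
      rw [h2n, Finset.sum_range_succ']
      simp [Nat.mul_add]
      ring
    exact le_trans (by exact hfin) (le_of_eq hE)
  · rw [Nat.geomSum_eq hn]
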